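/- Let (B,Δ,ε,1,μ) be a nonassociative C³I-bialgebra over K. (i) If μ′ and μ″ both witness left-regularity of B, then μ′ = μ″. (ii) If in addition Δ is cocommutative and μ′ witnesses left-regularity, then μ′ is a morphism of C³-coalgebras B⊗B → B (it preserves comultiplication, counit and sends 1⊗1 to 1). -/

import Mathlib

open TensorProduct

namespace RackPaper

variable (K : Type*) [CommRing K]
variable (B : Type*) [AddCommGroup B] [Module K B]

/-- Comultiplication of the tensor-product coalgebra `B ⊗ B`. -/
noncomputable def comul2 (comul : B →ₗ[K] B ⊗[K] B) :
    B ⊗[K] B →ₗ[K] (B ⊗[K] B) ⊗[K] (B ⊗[K] B) :=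
  (tensorTensorTensorComm K B B B B).toLinearMap ∘ₗ TensorProduct.map comul comul

/-- Counit of the tensor-product coalgebra `B ⊗ B`. -/
noncomputable def counit2 (counit : B →ₗ[K] K) : B ⊗[K] B →ₗ[K] K :=
  (LinearMap.mul' K K) ∘ₗ TensorProduct.map counit counit

/-- `(B, comul, counit, one)` is a coassociative counital coaugmented coalgebra. -/
structure IsC3Coalgebra (comul : B →ₗ[K] B ⊗[K] B) (counit : B →ₗ[K] K) (one : B) : Prop where
  coassoc : (TensorProduct.assoc K B B B).toLinearMap ∘ₗ
      (TensorProduct.map comul LinearMap.id) ∘ₗ comul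
      = (TensorProduct.map LinearMap.id comul) ∘ₗ comul
  counit_comul : (TensorProduct.lid K B).toLinearMap ∘ₗ
      (TensorProduct.map counit LinearMap.id) ∘ₗ comul = LinearMap.id
  comul_counit : (TensorProduct.rid K B).toLinearMap ∘ₗ
      (TensorProduct.map LinearMap.id counit) ∘ₗ comul = LinearMap.id
  comul_one : comul one = one ⊗ₜ[K] one
  counit_one : counit one = 1

/-- A nonassociative C³I-bialgebra: a C³-coalgebra with a multiplication which is
a morphism of C³-coalgebras. -/
structure IsC3IBialgebra (comul : B →ₗ[K] B ⊗[K] B) (counit : B →ₗ[K] K) (one : B)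
    (mul : B ⊗[K] B →ₗ[K] B) : Prop where
  isC3 : IsC3Coalgebra K B comul counit one
  comul_mul : comul ∘ₗ mul = (TensorProduct.map mul mul) ∘ₗ comul2 K B comul
  counit_mul : counit ∘ₗ mul = counit2 K B counit
  mul_one_one : mul (one ⊗ₜ[K] one) = one

/-- `μ'` witnesses the left-regularity of `(B, Δ, ε, 1, μ)`:
`Σ μ(a⁽¹⁾ ⊗ μ'(a⁽²⁾ ⊗ b)) = ε(a) b = Σ μ'(a⁽¹⁾ ⊗ μ(a⁽²⁾ ⊗ b))`. -/
def LeftRegularWitness (comul : B →ₗ[K] B ⊗[K] B) (counit : B →ₗ[K] K)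
    (mul mul' : B ⊗[K] B →ₗ[K] B) : Prop :=
  (mul ∘ₗ TensorProduct.map LinearMap.id mul' ∘ₗ (TensorProduct.assoc K B B B).toLinearMap ∘ₗ
      TensorProduct.map comul LinearMap.id
    = (TensorProduct.lid K B).toLinearMap ∘ₗ TensorProduct.map counit LinearMap.id) ∧
  (mul' ∘ₗ TensorProduct.map LinearMap.id mul ∘ₗ (TensorProduct.assoc K B B B).toLinearMap ∘ₗ
      TensorProduct.map comul LinearMap.id
    = (TensorProduct.lid K B).toLinearMap ∘ₗ TensorProduct.map counit LinearMap.id)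

section ConvAux

variable {K : Type*} [CommRing K] {B : Type*} [AddCommGroup B] [Module K B]

/-- Generalized convolution product. -/
noncomputable def conv (comul : B →ₗ[K] B ⊗[K] B) {A M N : Type*} [AddCommGroup A] [Module K A]
    [AddCommGroup M] [Module K M] [AddCommGroup N] [Module K N]
    (π : A →ₗ[K] M →ₗ[K] N) (Φ : B →ₗ[K] A) (G : B →ₗ[K] M) : B →ₗ[K] N :=
  TensorProduct.lift π ∘ₗ TensorProduct.map Φ G ∘ₗ comul

variable (comul : B →ₗ[K] B ⊗[K] B) (counit : B →ₗ[K] K)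

lemma conv_apply {A M N : Type*} [AddCommGroup A] [Module K A]
    [AddCommGroup M] [Module K M] [AddCommGroup N] [Module K N]
    (π : A →ₗ[K] M →ₗ[K] N) (Φ : B →ₗ[K] A) (G : B →ₗ[K] M) (a : B) :
    conv comul π Φ G a = TensorProduct.lift π (TensorProduct.map Φ G (comul a)) := rfl

lemma conv_assoc
    (hco : (TensorProduct.assoc K B B B).toLinearMap ∘ₗ
      (TensorProduct.map comul LinearMap.id) ∘ₗ comul
      = (TensorProduct.map LinearMap.id comul) ∘ₗ comul)
    {A M : Type*} [AddCommGroup A] [Module K A] [AddCommGroup M] [Module K M]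
    (μA : A →ₗ[K] A →ₗ[K] A) (π : A →ₗ[K] M →ₗ[K] M)
    (hπ : ∀ x y m, π x (π y m) = π (μA x y) m)
    (Φ Ψ : B →ₗ[K] A) (G : B →ₗ[K] M) :
    conv comul π Φ (conv comul π Ψ G) = conv comul π (conv comul μA Φ Ψ) G := by
  have core : TensorProduct.lift π ∘ₗ TensorProduct.map Φ (TensorProduct.lift π) ∘ₗ
      TensorProduct.map (LinearMap.id (M := B)) (TensorProduct.map Ψ G) ∘ₗ
      (TensorProduct.assoc K B B B).toLinearMap
      = TensorProduct.lift π ∘ₗ TensorProduct.map (TensorProduct.lift μA ∘ₗ TensorProduct.map Φ Ψ) G := by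
    ext x y z
    simp [hπ]
  have e1 : (TensorProduct.lift π ∘ₗ TensorProduct.map Φ (conv comul π Ψ G) : B ⊗[K] B →ₗ[K] M)
      = TensorProduct.lift π ∘ₗ TensorProduct.map Φ (TensorProduct.lift π) ∘ₗ
        TensorProduct.map LinearMap.id (TensorProduct.map Ψ G) ∘ₗ
        TensorProduct.map LinearMap.id comul := by
    ext x y
    simp [conv]
  have e2 : (TensorProduct.map (conv comul μA Φ Ψ) G : B ⊗[K] B →ₗ[K] _)
      = TensorProduct.map (TensorProduct.lift μA ∘ₗ TensorProduct.map Φ Ψ) G ∘ₗ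
        TensorProduct.map comul LinearMap.id := by
    ext x y
    simp [conv]
  refine LinearMap.ext fun a => ?_
  have h3 := LinearMap.congr_fun hco a
  simp only [LinearMap.comp_apply, LinearEquiv.coe_coe] at h3
  have l1 := LinearMap.congr_fun e1 (comul a)
  have l2 := LinearMap.congr_fun core ((TensorProduct.map comul LinearMap.id) (comul a))
  have l3 := LinearMap.congr_fun e2 (comul a)
  simp only [LinearMap.comp_apply, LinearEquiv.coe_coe] at l1 l2 l3
  rw [conv_apply, conv_apply, l1, ← h3, l2, l3]

lemma counit_left_eq
    (hcu : (TensorProduct.lid K B).toLinearMap ∘ₗ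
      (TensorProduct.map counit LinearMap.id) ∘ₗ comul = LinearMap.id) :
    (TensorProduct.map counit (LinearMap.id (M := B))) ∘ₗ comul
      = (TensorProduct.lid K B).symm.toLinearMap := by
  refine LinearMap.ext fun a => ?_
  have h := LinearMap.congr_fun hcu a
  simp only [LinearMap.comp_apply, LinearEquiv.coe_coe, LinearMap.id_apply] at h ⊢
  rw [LinearEquiv.eq_symm_apply]
  exact h

lemma counit_right_eq
    (hcu : (TensorProduct.rid K B).toLinearMap ∘ₗ
      (TensorProduct.map LinearMap.id counit) ∘ₗ comul = LinearMap.id) :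
    (TensorProduct.map (LinearMap.id (M := B)) counit) ∘ₗ comul
      = (TensorProduct.rid K B).symm.toLinearMap := by
  refine LinearMap.ext fun a => ?_
  have h := LinearMap.congr_fun hcu a
  simp only [LinearMap.comp_apply, LinearEquiv.coe_coe, LinearMap.id_apply] at h ⊢
  rw [LinearEquiv.eq_symm_apply]
  exact h

lemma conv_unit_left
    (hcu : (TensorProduct.lid K B).toLinearMap ∘ₗ
      (TensorProduct.map counit LinearMap.id) ∘ₗ comul = LinearMap.id)
    {A M N : Type*} [AddCommGroup A] [Module K A] [AddCommGroup M] [Module K M]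
    [AddCommGroup N] [Module K N]
    (π : A →ₗ[K] M →ₗ[K] N) (u : A) (G : B →ₗ[K] M) :
    conv comul π (LinearMap.toSpanSingleton K A u ∘ₗ counit) G
      = π u ∘ₗ G := by
  have e1 : (TensorProduct.map (LinearMap.toSpanSingleton K A u ∘ₗ counit) G : B ⊗[K] B →ₗ[K] _)
      = TensorProduct.map (LinearMap.toSpanSingleton K A u) G ∘ₗ TensorProduct.map counit LinearMap.id := by
    ext x y; simp
  refine LinearMap.ext fun a => ?_
  have l0 := LinearMap.congr_fun (counit_left_eq comul counit hcu) a
  simp only [LinearMap.comp_apply, LinearEquiv.coe_coe] at l0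
  have l1 := LinearMap.congr_fun e1 (comul a)
  simp only [LinearMap.comp_apply] at l1
  simp [conv, l1, l0]

lemma conv_unit_right
    (hcu : (TensorProduct.rid K B).toLinearMap ∘ₗ
      (TensorProduct.map LinearMap.id counit) ∘ₗ comul = LinearMap.id)
    {A M N : Type*} [AddCommGroup A] [Module K A] [AddCommGroup M] [Module K M]
    [AddCommGroup N] [Module K N]
    (π : A →ₗ[K] M →ₗ[K] N) (m : M) (Φ : B →ₗ[K] A) :
    conv comul π Φ (LinearMap.toSpanSingleton K M m ∘ₗ counit)
      = π.flip m ∘ₗ Φ := by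
  have e1 : (TensorProduct.map Φ (LinearMap.toSpanSingleton K M m ∘ₗ counit) : B ⊗[K] B →ₗ[K] _)
      = TensorProduct.map Φ (LinearMap.toSpanSingleton K M m) ∘ₗ TensorProduct.map LinearMap.id counit := by
    ext x y; simp
  refine LinearMap.ext fun a => ?_
  have l0 := LinearMap.congr_fun (counit_right_eq comul counit hcu) a
  simp only [LinearMap.comp_apply, LinearEquiv.coe_coe] at l0
  have l1 := LinearMap.congr_fun e1 (comul a)
  simp only [LinearMap.comp_apply] at l1
  simp [conv, l1, l0]

/-- Translation: a witness composite equation gives a convolution identity in `Hom(B, End B)`. -/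
lemma witness_to_conv (m₁ m₂ : B ⊗[K] B →ₗ[K] B)
    (hw : m₁ ∘ₗ TensorProduct.map LinearMap.id m₂ ∘ₗ (TensorProduct.assoc K B B B).toLinearMap ∘ₗ
      TensorProduct.map comul LinearMap.id
      = (TensorProduct.lid K B).toLinearMap ∘ₗ TensorProduct.map counit LinearMap.id) :
    conv comul (LinearMap.llcomp K B B B) (TensorProduct.curry m₁) (TensorProduct.curry m₂)
      = LinearMap.toSpanSingleton K (B →ₗ[K] B) LinearMap.id ∘ₗ counit := by
  have key : ∀ (t : B ⊗[K] B) (b : B),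
      TensorProduct.lift (LinearMap.llcomp K B B B)
        (TensorProduct.map (TensorProduct.curry m₁) (TensorProduct.curry m₂) t) b
      = m₁ (TensorProduct.map LinearMap.id m₂ ((TensorProduct.assoc K B B B) (t ⊗ₜ[K] b))) := by
    intro t b
    induction t using TensorProduct.induction_on with
    | zero => simp
    | tmul x y => simp
    | add u v hu hv =>
        simp only [map_add, LinearMap.add_apply, add_tmul] at *
        rw [hu, hv]
  refine LinearMap.ext fun a => ?_
  refine LinearMap.ext fun b => ?_
  have hw' := LinearMap.congr_fun hw (a ⊗ₜ[K] b)
  simp only [LinearMap.comp_apply, LinearEquiv.coe_coe, map_tmul, LinearMap.id_apply] at hw'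
  simpa [conv, key (comul a) b] using hw'

/-- `MM m a = Σ L_{a⁽¹⁾} ⊗ L_{a⁽²⁾}` as an operator on `B ⊗ B`. -/
noncomputable def MM (m : B ⊗[K] B →ₗ[K] B) : B →ₗ[K] (B ⊗[K] B →ₗ[K] B ⊗[K] B) :=
  TensorProduct.homTensorHomMap (RingHom.id K) B B B B ∘ₗ
    TensorProduct.map (TensorProduct.curry m) (TensorProduct.curry m) ∘ₗ comul

lemma E4 (m : B ⊗[K] B →ₗ[K] B) (t u : B ⊗[K] B) :
    TensorProduct.homTensorHomMap (RingHom.id K) B B B B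
      (TensorProduct.map (TensorProduct.curry m) (TensorProduct.curry m) t) u
    = TensorProduct.map m m ((tensorTensorTensorComm K B B B B) (t ⊗ₜ[K] u)) := by
  induction t using TensorProduct.induction_on with
  | zero => simp
  | tmul x y =>
      induction u using TensorProduct.induction_on with
      | zero => simp
      | tmul z w => simp
      | add p q hp hq => simp only [tmul_add, map_add] at *; rw [hp, hq]
  | add p q hp hq => simp only [add_tmul, map_add, LinearMap.add_apply] at *; rw [hp, hq]

lemma MM_apply_comul (m : B ⊗[K] B →ₗ[K] B)
    (hcm : comul ∘ₗ m = TensorProduct.map m m ∘ₗ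
      ((tensorTensorTensorComm K B B B B).toLinearMap ∘ₗ TensorProduct.map comul comul)) (a : B) :
    MM comul m a ∘ₗ comul = comul ∘ₗ TensorProduct.curry m a := by
  refine LinearMap.ext fun b => ?_
  have h := LinearMap.congr_fun hcm (a ⊗ₜ[K] b)
  simp only [LinearMap.comp_apply, LinearEquiv.coe_coe, map_tmul,
    TensorProduct.curry_apply] at h ⊢
  rw [MM]
  simp only [LinearMap.comp_apply]
  rw [E4, h]

/-- Swap the first two slots of `B ⊗ (B ⊗ B)`. -/
noncomputable def sig : B ⊗[K] (B ⊗[K] B) →ₗ[K] B ⊗[K] (B ⊗[K] B) :=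
  (TensorProduct.assoc K B B B).toLinearMap ∘ₗ
    TensorProduct.map (TensorProduct.comm K B B).toLinearMap LinearMap.id ∘ₗ
    (TensorProduct.assoc K B B B).symm.toLinearMap

lemma sig_comul3
    (hco : (TensorProduct.assoc K B B B).toLinearMap ∘ₗ
      (TensorProduct.map comul LinearMap.id) ∘ₗ comul
      = (TensorProduct.map LinearMap.id comul) ∘ₗ comul)
    (hcc : (TensorProduct.comm K B B).toLinearMap ∘ₗ comul = comul) :
    sig ∘ₗ (TensorProduct.map LinearMap.id comul ∘ₗ comul)
      = TensorProduct.map LinearMap.id comul ∘ₗ comul := by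
  have e1 : (sig : B ⊗[K] (B ⊗[K] B) →ₗ[K] _) ∘ₗ (TensorProduct.assoc K B B B).toLinearMap
      = (TensorProduct.assoc K B B B).toLinearMap ∘ₗ
        TensorProduct.map (TensorProduct.comm K B B).toLinearMap LinearMap.id := by
    ext x y z; simp [sig]
  have e2 : TensorProduct.map (TensorProduct.comm K B B).toLinearMap (LinearMap.id (M := B)) ∘ₗ
      TensorProduct.map comul LinearMap.id
      = TensorProduct.map ((TensorProduct.comm K B B).toLinearMap ∘ₗ comul) LinearMap.id := by
    ext x y; simp
  refine LinearMap.ext fun a => ?_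
  have h := LinearMap.congr_fun hco a
  have h1 := LinearMap.congr_fun e1 (TensorProduct.map comul LinearMap.id (comul a))
  have h2 := LinearMap.congr_fun e2 (comul a)
  simp only [LinearMap.comp_apply, LinearEquiv.coe_coe] at h h1 h2 ⊢
  rw [← h, h1, h2]
  have e3 : TensorProduct.map ((TensorProduct.comm K B B).toLinearMap ∘ₗ comul)
      (LinearMap.id (M := B)) = TensorProduct.map comul LinearMap.id := by rw [hcc]
  rw [e3, h]

/-- The 4-fold swap identity from cocommutativity + coassociativity. -/
lemma swap4
    (hco : (TensorProduct.assoc K B B B).toLinearMap ∘ₗ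
      (TensorProduct.map comul LinearMap.id) ∘ₗ comul
      = (TensorProduct.map LinearMap.id comul) ∘ₗ comul)
    (hcc : (TensorProduct.comm K B B).toLinearMap ∘ₗ comul = comul) :
    (tensorTensorTensorComm K B B B B).toLinearMap ∘ₗ TensorProduct.map comul comul ∘ₗ comul
      = TensorProduct.map comul comul ∘ₗ comul := by
  have decomp : TensorProduct.map comul comul ∘ₗ comul
      = (TensorProduct.assoc K B B (B ⊗[K] B)).symm.toLinearMap ∘ₗ
        TensorProduct.map LinearMap.id (TensorProduct.map LinearMap.id comul ∘ₗ comul) ∘ₗ comul := by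
    have s1 : (TensorProduct.map comul comul : B ⊗[K] B →ₗ[K] _)
        = TensorProduct.map LinearMap.id comul ∘ₗ TensorProduct.map comul LinearMap.id := by
      ext x y; simp
    have s2 : TensorProduct.map comul (LinearMap.id (M := B)) ∘ₗ comul
        = (TensorProduct.assoc K B B B).symm.toLinearMap ∘ₗ
          TensorProduct.map LinearMap.id comul ∘ₗ comul := by
      refine LinearMap.ext fun a => ?_
      have h := LinearMap.congr_fun hco a
      simp only [LinearMap.comp_apply, LinearEquiv.coe_coe] at h ⊢
      rw [← h]; simp
    have s3 : TensorProduct.map (LinearMap.id (M := B ⊗[K] B)) comul ∘ₗ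
        (TensorProduct.assoc K B B B).symm.toLinearMap
        = (TensorProduct.assoc K B B (B ⊗[K] B)).symm.toLinearMap ∘ₗ
          TensorProduct.map LinearMap.id (TensorProduct.map LinearMap.id comul) := by
      ext x y z; simp
    refine LinearMap.ext fun a => ?_
    have h1 := LinearMap.congr_fun s1 (comul a)
    have h2 := LinearMap.congr_fun s2 a
    have h3 := LinearMap.congr_fun s3 (TensorProduct.map LinearMap.id comul (comul a))
    simp only [LinearMap.comp_apply, LinearEquiv.coe_coe] at h1 h2 h3 ⊢
    rw [h1, h2, h3]
    congr 1
    have s4 : TensorProduct.map (LinearMap.id (M := B)) (TensorProduct.map LinearMap.id comul) ∘ₗ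
        TensorProduct.map LinearMap.id comul
        = TensorProduct.map LinearMap.id (TensorProduct.map LinearMap.id comul ∘ₗ comul) := by
      ext x y; simp
    exact LinearMap.congr_fun s4 (comul a)
  have s5 : (tensorTensorTensorComm K B B B B).toLinearMap ∘ₗ
      (TensorProduct.assoc K B B (B ⊗[K] B)).symm.toLinearMap
      = (TensorProduct.assoc K B B (B ⊗[K] B)).symm.toLinearMap ∘ₗ
        TensorProduct.map LinearMap.id (sig (K := K) (B := B)) := by
    ext x y z w
    simp [sig]
  have s6 : TensorProduct.map (LinearMap.id (M := B)) (sig (K := K) (B := B)) ∘ₗ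
      TensorProduct.map LinearMap.id (TensorProduct.map LinearMap.id comul ∘ₗ comul)
      = TensorProduct.map LinearMap.id
          (sig ∘ₗ (TensorProduct.map LinearMap.id comul ∘ₗ comul)) := by
    ext x y; simp
  refine LinearMap.ext fun a => ?_
  have hd := LinearMap.congr_fun decomp a
  have h5 := LinearMap.congr_fun s5
    (TensorProduct.map LinearMap.id (TensorProduct.map LinearMap.id comul ∘ₗ comul) (comul a))
  have h6 := LinearMap.congr_fun s6 (comul a)
  simp only [LinearMap.comp_apply, LinearEquiv.coe_coe] at hd h5 h6 ⊢
  rw [hd, h5, h6]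
  congr 1
  have s7 : TensorProduct.map (LinearMap.id (M := B))
      (sig ∘ₗ (TensorProduct.map LinearMap.id comul ∘ₗ comul))
      = TensorProduct.map LinearMap.id (TensorProduct.map LinearMap.id comul ∘ₗ comul) := by
    rw [sig_comul3 comul hco hcc]
  exact LinearMap.congr_fun s7 (comul a)

lemma interchange
    (hswap : (tensorTensorTensorComm K B B B B).toLinearMap ∘ₗ
        TensorProduct.map comul comul ∘ₗ comul = TensorProduct.map comul comul ∘ₗ comul)
    (f g h k : B →ₗ[K] B →ₗ[K] B) :
    conv comul (LinearMap.llcomp K (B ⊗[K] B) (B ⊗[K] B) (B ⊗[K] B))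
      (TensorProduct.homTensorHomMap (RingHom.id K) B B B B ∘ₗ TensorProduct.map f g ∘ₗ comul)
      (TensorProduct.homTensorHomMap (RingHom.id K) B B B B ∘ₗ TensorProduct.map h k ∘ₗ comul)
    = TensorProduct.homTensorHomMap (RingHom.id K) B B B B ∘ₗ
        TensorProduct.map (conv comul (LinearMap.llcomp K B B B) f h)
          (conv comul (LinearMap.llcomp K B B B) g k) ∘ₗ comul := by
  have E3 : TensorProduct.lift (LinearMap.llcomp K (B ⊗[K] B) (B ⊗[K] B) (B ⊗[K] B)) ∘ₗ
      TensorProduct.map (TensorProduct.homTensorHomMap (RingHom.id K) B B B B)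
        (TensorProduct.homTensorHomMap (RingHom.id K) B B B B) ∘ₗ
      TensorProduct.map (TensorProduct.map f g) (TensorProduct.map h k) ∘ₗ
      (tensorTensorTensorComm K B B B B).toLinearMap
      = TensorProduct.homTensorHomMap (RingHom.id K) B B B B ∘ₗ
        TensorProduct.map (TensorProduct.lift (LinearMap.llcomp K B B B) ∘ₗ TensorProduct.map f h)
          (TensorProduct.lift (LinearMap.llcomp K B B B) ∘ₗ TensorProduct.map g k) := by
    ext x y z w u v
    simp
  have Estruct : TensorProduct.map
      (TensorProduct.homTensorHomMap (RingHom.id K) B B B B ∘ₗ TensorProduct.map f g ∘ₗ comul)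
      (TensorProduct.homTensorHomMap (RingHom.id K) B B B B ∘ₗ TensorProduct.map h k ∘ₗ comul)
      = TensorProduct.map (TensorProduct.homTensorHomMap (RingHom.id K) B B B B)
          (TensorProduct.homTensorHomMap (RingHom.id K) B B B B) ∘ₗ
        TensorProduct.map (TensorProduct.map f g) (TensorProduct.map h k) ∘ₗ
        TensorProduct.map comul comul := by
    ext x y; simp
  have Estruct2 : TensorProduct.map (conv comul (LinearMap.llcomp K B B B) f h)
        (conv comul (LinearMap.llcomp K B B B) g k)
      = TensorProduct.map
          (TensorProduct.lift (LinearMap.llcomp K B B B) ∘ₗ TensorProduct.map f h)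
          (TensorProduct.lift (LinearMap.llcomp K B B B) ∘ₗ TensorProduct.map g k) ∘ₗ
        TensorProduct.map comul comul := by
    ext x y; simp [conv]
  refine LinearMap.ext fun a => ?_
  have h1 := LinearMap.congr_fun Estruct (comul a)
  have h2 := LinearMap.congr_fun hswap a
  have h3 := LinearMap.congr_fun E3 (TensorProduct.map comul comul (comul a))
  have h4 := LinearMap.congr_fun Estruct2 (comul a)
  simp only [LinearMap.comp_apply, LinearEquiv.coe_coe] at h1 h2 h3 h4 ⊢
  show TensorProduct.lift (LinearMap.llcomp K (B ⊗[K] B) (B ⊗[K] B) (B ⊗[K] B))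
      (TensorProduct.map _ _ (comul a)) = _
  rw [h1, ← h2, h3, ← h4]

/-- `Σ ε(a⁽¹⁾) ε(a⁽²⁾) = ε(a)` as maps. -/
lemma eps2
    (hcu : (TensorProduct.lid K B).toLinearMap ∘ₗ
      (TensorProduct.map counit LinearMap.id) ∘ₗ comul = LinearMap.id) :
    LinearMap.mul' K K ∘ₗ TensorProduct.map counit counit ∘ₗ comul = counit := by
  have s1 : (TensorProduct.map counit counit : B ⊗[K] B →ₗ[K] _)
      = TensorProduct.map LinearMap.id counit ∘ₗ TensorProduct.map counit LinearMap.id := by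
    ext x y; simp
  refine LinearMap.ext fun a => ?_
  have h1 := LinearMap.congr_fun s1 (comul a)
  have h0 := LinearMap.congr_fun (counit_left_eq comul counit hcu) a
  simp only [LinearMap.comp_apply, LinearEquiv.coe_coe] at h1 h0 ⊢
  rw [h1, h0]
  simp

/-- `htH ∘ map (ε·id) (ε·id) ∘ Δ = ε · id₂`. -/
lemma hth_unit
    (hcu : (TensorProduct.lid K B).toLinearMap ∘ₗ
      (TensorProduct.map counit LinearMap.id) ∘ₗ comul = LinearMap.id) :
    TensorProduct.homTensorHomMap (RingHom.id K) B B B B ∘ₗ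
      TensorProduct.map (LinearMap.toSpanSingleton K (B →ₗ[K] B) LinearMap.id ∘ₗ counit)
        (LinearMap.toSpanSingleton K (B →ₗ[K] B) LinearMap.id ∘ₗ counit) ∘ₗ comul
    = LinearMap.toSpanSingleton K (B ⊗[K] B →ₗ[K] B ⊗[K] B) LinearMap.id ∘ₗ counit := by
  have s1 : TensorProduct.homTensorHomMap (RingHom.id K) B B B B ∘ₗ
      TensorProduct.map (LinearMap.toSpanSingleton K (B →ₗ[K] B) LinearMap.id)
        (LinearMap.toSpanSingleton K (B →ₗ[K] B) LinearMap.id)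
      = LinearMap.toSpanSingleton K (B ⊗[K] B →ₗ[K] B ⊗[K] B) LinearMap.id ∘ₗ
        LinearMap.mul' K K := by
    ext j k
    simp [smul_smul, TensorProduct.smul_tmul']
  have s2 : TensorProduct.map
      (LinearMap.toSpanSingleton K (B →ₗ[K] B) LinearMap.id ∘ₗ counit)
      (LinearMap.toSpanSingleton K (B →ₗ[K] B) LinearMap.id ∘ₗ counit)
      = TensorProduct.map (LinearMap.toSpanSingleton K (B →ₗ[K] B) LinearMap.id)
          (LinearMap.toSpanSingleton K (B →ₗ[K] B) LinearMap.id) ∘ₗ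
        TensorProduct.map counit counit := by
    ext x y; simp
  refine LinearMap.ext fun a => ?_
  have h1 := LinearMap.congr_fun s2 (comul a)
  have h2 := LinearMap.congr_fun s1 (TensorProduct.map counit counit (comul a))
  have h3 := LinearMap.congr_fun (eps2 comul counit hcu) a
  simp only [LinearMap.comp_apply] at h1 h2 h3 ⊢
  rw [h1, h2, h3]

end ConvAux

/-- Let `(B, Δ, ε, 1, μ)` be a nonassociative C³I-bialgebra over `K`.
(i) If `μ'` and `μ''` both witness left-regularity of `B`, then `μ' = μ''`.
(ii) If in addition `Δ` is cocommutative and `μ'` witnesses left-regularity, then `μ'` is a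
morphism of C³-coalgebras `B ⊗ B → B`: it preserves the comultiplication and the counit,
and sends `1 ⊗ 1` to `1`. -/
theorem leftRegular_witness_unique_and_coalgebra_morphism
    (K : Type*) [CommRing K] [Algebra ℚ K]
    (B : Type*) [AddCommGroup B] [Module K B]
    (comul : B →ₗ[K] B ⊗[K] B) (counit : B →ₗ[K] K) (one : B) (mul : B ⊗[K] B →ₗ[K] B)
    (hB : IsC3IBialgebra K B comul counit one mul) :
    (∀ mul' mul'' : B ⊗[K] B →ₗ[K] B,
      LeftRegularWitness K B comul counit mul mul' →
      LeftRegularWitness K B comul counit mul mul'' → mul' = mul'') ∧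
    ((∀ x : B, (TensorProduct.comm K B B) (comul x) = comul x) →
      ∀ mul' : B ⊗[K] B →ₗ[K] B, LeftRegularWitness K B comul counit mul mul' →
        (comul ∘ₗ mul' = (TensorProduct.map mul' mul') ∘ₗ comul2 K B comul) ∧
        (counit ∘ₗ mul' = counit2 K B counit) ∧
        mul' (one ⊗ₜ[K] one) = one) := by
  obtain ⟨hC3, hcm, hcnm, h11⟩ := hB
  obtain ⟨hco, hcul, hcur, hc1, he1⟩ := hC3
  have llid : LinearMap.llcomp (σ₁₂ := RingHom.id K) K B B B LinearMap.id = LinearMap.id := by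
    ext f b; simp
  have llflip : (LinearMap.llcomp (σ₁₂ := RingHom.id K) (σ₂₃ := RingHom.id K) (σ₁₃ := RingHom.id K) K B B B).flip LinearMap.id = LinearMap.id := by
    ext f b; simp
  constructor
  · -- uniqueness
    intro mul' mul'' hw' hw''
    have h1 : conv comul (LinearMap.llcomp K B B B)
        (TensorProduct.curry mul') (TensorProduct.curry mul)
        = LinearMap.toSpanSingleton K (B →ₗ[K] B) LinearMap.id ∘ₗ counit :=
      witness_to_conv comul counit mul' mul hw'.2
    have h2 : conv comul (LinearMap.llcomp K B B B)
        (TensorProduct.curry mul) (TensorProduct.curry mul'')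
        = LinearMap.toSpanSingleton K (B →ₗ[K] B) LinearMap.id ∘ₗ counit :=
      witness_to_conv comul counit mul mul'' hw''.1
    have hassoc := conv_assoc comul hco (LinearMap.llcomp K B B B) (LinearMap.llcomp K B B B)
      (fun _ _ _ => rfl) (TensorProduct.curry mul') (TensorProduct.curry mul)
      (TensorProduct.curry mul'')
    rw [h2, h1] at hassoc
    rw [conv_unit_right comul counit hcur _ LinearMap.id, llflip, LinearMap.id_comp] at hassoc
    rw [conv_unit_left comul counit hcul _ LinearMap.id, llid, LinearMap.id_comp] at hassoc
    exact TensorProduct.curry_injective hassoc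
  · -- coalgebra morphism
    intro hcomm mul' hw
    have hcc : (TensorProduct.comm K B B).toLinearMap ∘ₗ comul = comul := by
      refine LinearMap.ext fun x => ?_
      simpa using hcomm x
    have hconv1 : conv comul (LinearMap.llcomp K B B B)
        (TensorProduct.curry mul) (TensorProduct.curry mul')
        = LinearMap.toSpanSingleton K (B →ₗ[K] B) LinearMap.id ∘ₗ counit :=
      witness_to_conv comul counit mul mul' hw.1
    have hconv2 : conv comul (LinearMap.llcomp K B B B)
        (TensorProduct.curry mul') (TensorProduct.curry mul)
        = LinearMap.toSpanSingleton K (B →ₗ[K] B) LinearMap.id ∘ₗ counit :=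
      witness_to_conv comul counit mul' mul hw.2
    refine ⟨?_, ?_, ?_⟩
    · -- comultiplicativity
      have hswap := swap4 comul hco hcc
      -- F4 : conv (MM mul') (MM mul) = unit
      have hF4 : conv comul (LinearMap.llcomp K (B ⊗[K] B) (B ⊗[K] B) (B ⊗[K] B))
          (MM comul mul') (MM comul mul)
          = LinearMap.toSpanSingleton K (B ⊗[K] B →ₗ[K] B ⊗[K] B) LinearMap.id ∘ₗ counit := by
        have := interchange comul hswap (TensorProduct.curry mul') (TensorProduct.curry mul')
          (TensorProduct.curry mul) (TensorProduct.curry mul)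
        rw [hconv2] at this
        rw [show (MM comul mul' : B →ₗ[K] _) = TensorProduct.homTensorHomMap (RingHom.id K) B B B B ∘ₗ
            TensorProduct.map (TensorProduct.curry mul') (TensorProduct.curry mul') ∘ₗ comul from rfl,
          show (MM comul mul : B →ₗ[K] _) = TensorProduct.homTensorHomMap (RingHom.id K) B B B B ∘ₗ
            TensorProduct.map (TensorProduct.curry mul) (TensorProduct.curry mul) ∘ₗ comul from rfl,
          this]
        exact hth_unit comul counit hcul
      -- P' := comul ∘ L'
      set πc := LinearMap.llcomp (σ₁₂ := RingHom.id K) (σ₂₃ := RingHom.id K) (σ₁₃ := RingHom.id K) K B (B ⊗[K] B) (B ⊗[K] B) with hπc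
      set P' := LinearMap.llcomp K B B (B ⊗[K] B) comul ∘ₗ TensorProduct.curry mul' with hP'
      -- F-B : conv (MM mul) P' = ε • comul
      have hFB : conv comul πc (MM comul mul) P'
          = LinearMap.toSpanSingleton K (B →ₗ[K] B ⊗[K] B) comul ∘ₗ counit := by
        have E5 : TensorProduct.lift πc ∘ₗ
            TensorProduct.map (MM comul mul) P'
            = LinearMap.llcomp K B B (B ⊗[K] B) comul ∘ₗ
              TensorProduct.lift (LinearMap.llcomp K B B B) ∘ₗ
              TensorProduct.map (TensorProduct.curry mul) (TensorProduct.curry mul') := by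
          ext x y b
          have hdag := LinearMap.congr_fun (MM_apply_comul comul mul hcm x)
            ((TensorProduct.curry mul') y b)
          simp only [LinearMap.comp_apply] at hdag
          simpa [hP', hπc] using hdag
        refine LinearMap.ext fun a => ?_
        have h1 := LinearMap.congr_fun E5 (comul a)
        have h2 := LinearMap.congr_fun hconv1 a
        rw [conv_apply] at h2
        simp only [LinearMap.comp_apply] at h1 h2 ⊢
        rw [conv_apply, h1, h2]
        ext b
        simp
      -- assemble
      have hassoc := conv_assoc comul hco
        (LinearMap.llcomp K (B ⊗[K] B) (B ⊗[K] B) (B ⊗[K] B)) πc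
        (fun _ _ _ => rfl) (MM comul mul') (MM comul mul) P'
      rw [hFB, hF4] at hassoc
      rw [conv_unit_right comul counit hcur _ comul] at hassoc
      rw [conv_unit_left comul counit hcul _ LinearMap.id] at hassoc
      have hπid : (πc LinearMap.id : (B →ₗ[K] B ⊗[K] B) →ₗ[K] _) = LinearMap.id := by
        ext g b; simp [hπc]
      rw [hπid, LinearMap.id_comp] at hassoc
      -- hassoc : conv πc M' (ts comul ∘ ε) = P'  →  πc.flip comul ∘ₗ M' = P'
      -- now extract pointwise
      refine TensorProduct.ext' fun a b => ?_
      have hab := LinearMap.congr_fun (LinearMap.congr_fun hassoc a) b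
      simp only [LinearMap.comp_apply, LinearMap.flip_apply, hπc, LinearMap.llcomp_apply,
        hP', TensorProduct.curry_apply] at hab
      have hE4 := E4 mul' (comul a) (comul b)
      rw [comul2]
      simp only [LinearMap.comp_apply, LinearEquiv.coe_coe, map_tmul]
      rw [← hE4]
      rw [← hab]
      rfl
    · -- counit
      have CL' : ∀ g : B ⊗[K] B →ₗ[K] K,
          LinearMap.mul' K K ∘ₗ TensorProduct.map counit g ∘ₗ
            (TensorProduct.assoc K B B B).toLinearMap ∘ₗ
            TensorProduct.map comul LinearMap.id = g := by
        intro g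
        have e : LinearMap.mul' K K ∘ₗ TensorProduct.map counit g ∘ₗ
            (TensorProduct.assoc K B B B).toLinearMap
            = g ∘ₗ TensorProduct.map
                ((TensorProduct.lid K B).toLinearMap ∘ₗ TensorProduct.map counit LinearMap.id)
                LinearMap.id := by
          ext x y b
          simp only [LinearMap.comp_apply, LinearEquiv.coe_coe, map_tmul, LinearMap.id_apply,
            TensorProduct.assoc_tmul, LinearMap.mul'_apply, TensorProduct.lid_tmul,
            TensorProduct.AlgebraTensorModule.curry_apply, TensorProduct.curry_apply,
            LinearMap.coe_restrictScalars]
          rw [← TensorProduct.smul_tmul', map_smul, smul_eq_mul]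
        refine TensorProduct.ext' fun a b => ?_
        have h1 := LinearMap.congr_fun e ((comul a) ⊗ₜ[K] b)
        have h2 := LinearMap.congr_fun hcul a
        simp only [LinearMap.comp_apply, LinearEquiv.coe_coe, map_tmul,
          LinearMap.id_apply] at h1 h2 ⊢
        rw [h1, h2]
      have e6 : counit2 K B counit ∘ₗ TensorProduct.map LinearMap.id mul'
          = LinearMap.mul' K K ∘ₗ TensorProduct.map counit (counit ∘ₗ mul') := by
        ext x u
        simp [counit2]
      refine TensorProduct.ext' fun a b => ?_
      have h1 := LinearMap.congr_fun hw.1 (a ⊗ₜ[K] b)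
      have h2 := LinearMap.congr_fun hcnm
        (TensorProduct.map LinearMap.id mul' ((TensorProduct.assoc K B B B) ((comul a) ⊗ₜ[K] b)))
      have h3 := LinearMap.congr_fun e6
        ((TensorProduct.assoc K B B B) ((comul a) ⊗ₜ[K] b))
      have h4 := LinearMap.congr_fun (CL' (counit ∘ₗ mul')) (a ⊗ₜ[K] b)
      simp only [LinearMap.comp_apply, LinearEquiv.coe_coe, map_tmul,
        LinearMap.id_apply] at h1 h2 h3 h4 ⊢
      rw [← h4, ← h3, ← h2, h1]
      simp [counit2]
    · -- unit
      have h := LinearMap.congr_fun hw.2 (one ⊗ₜ[K] one)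
      simp only [LinearMap.comp_apply, LinearEquiv.coe_coe, map_tmul, LinearMap.id_apply,
        hc1, he1] at h
      rw [TensorProduct.assoc_tmul] at h
      simp only [map_tmul, LinearMap.id_apply, h11] at h
      simpa [he1] using h

end RackPaper
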